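/- Let T be maximally monotone, h ∈ H(T), and define the enlargement T̆_h(ε, x) := {x* : (x*, x) ∈ ∂_{2ε} h(x, x*)} (ε-subdifferential of h at (x,x*)). Then x* ∈ T̆_h(ε, x) if and only if (A h)(x, x*) ≤ ⟨x, x*⟩ + ε, where A h := (1/2)(h + h* ∘ i). -/

import Mathlib

open NormedSpace

noncomputable section

/-- Convexity for extended-real-valued functions. -/
def EConvexOn {E : Type*} [AddCommMonoid E] [Module ℝ E] (f : E → EReal) : Prop :=
  ∀ x y : E, ∀ a b : ℝ, 0 ≤ a → 0 ≤ b → a + b = 1 →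
    f (a • x + b • y) ≤ (a : EReal) * f x + (b : EReal) * f y

/-- Properness: somewhere finite and never `⊥` (i.e. values in `ℝ ∪ {+∞}`). -/
def EProper {E : Type*} (f : E → EReal) : Prop :=
  (∃ x, f x ≠ ⊤) ∧ ∀ x, f x ≠ ⊥

variable {X : Type*} [NormedAddCommGroup X] [NormedSpace ℝ X]

/-- The ε-subdifferential of `f : X → ℝ ∪ {+∞}` at `x`. -/
def epsSubdiff (f : X → EReal) (ε : ℝ) (x : X) : Set (StrongDual ℝ X) :=
  {p | f x ≠ ⊤ ∧ ∀ y : X, f x + ((p (y - x) : ℝ) : EReal) ≤ f y + (ε : EReal)}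

/-- The Fenchel conjugate of `f : X → ℝ ∪ {+∞}`. -/
def fconj (f : X → EReal) (p : StrongDual ℝ X) : EReal :=
  ⨆ y : X, ((p y : ℝ) : EReal) - f y

/-- The duality pairing `⟨x, x*⟩` on `X × X*`. -/
def pairing (z : X × StrongDual ℝ X) : ℝ := z.2 z.1

/-- `h* ∘ i`, the conjugate of `h : X × X* → ℝ ∪ {+∞}` with respect to the pairing
`⟨(x,x*),(y*,y)⟩ = ⟨x,y*⟩ + ⟨y,x*⟩`, composed with the swap `i(x,x*) = (x*,x)`. -/
def conjI (h : X × StrongDual ℝ X → EReal) (z : X × StrongDual ℝ X) : EReal :=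
  ⨆ w : X × StrongDual ℝ X, ((z.2 w.1 + w.2 z.1 : ℝ) : EReal) - h w

/-- The averaging map `A h := (1/2)(h + h* ∘ i)`. -/
def Amap (h : X × StrongDual ℝ X → EReal) : X × StrongDual ℝ X → EReal :=
  fun z => (((1 : ℝ)/2 : ℝ) : EReal) * (h z + conjI h z)

/-- Monotone multivalued operator `T : X ⇉ X*`. -/
def IsMonotoneOp (T : X → Set (StrongDual ℝ X)) : Prop :=
  ∀ ⦃x p y q⦄, p ∈ T x → q ∈ T y → 0 ≤ (p - q) (x - y)

/-- Maximally monotone operator. -/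
def IsMaxMonotoneOp (T : X → Set (StrongDual ℝ X)) : Prop :=
  IsMonotoneOp T ∧ ∀ x p, (∀ y q, q ∈ T y → 0 ≤ (p - q) (x - y)) → p ∈ T x

/-- The Fitzpatrick family `H(T)`: lsc convex `h ≥ ⟨·,·⟩` with equality on `gph T`. -/
def InFitzFamily (T : X → Set (StrongDual ℝ X)) (h : X × StrongDual ℝ X → EReal) : Prop :=
  LowerSemicontinuous h ∧ EConvexOn h ∧ (∀ z, (pairing z : EReal) ≤ h z) ∧
    ∀ x p, p ∈ T x → h (x, p) = (pairing (x, p) : EReal)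

/-- The δ-subdifferential of `h : X × X* → ℝ ∪ {+∞}` with respect to the pairing
`⟨(x,x*),(y*,y)⟩ = ⟨x,y*⟩ + ⟨y,x*⟩`. -/
def epsSubdiff2 (h : X × StrongDual ℝ X → EReal) (δ : ℝ) (z : X × StrongDual ℝ X) :
    Set (StrongDual ℝ X × X) :=
  {w | h z ≠ ⊤ ∧ ∀ u : X × StrongDual ℝ X,
    h z + ((w.1 (u.1 - z.1) + (u.2 - z.2) w.2 : ℝ) : EReal) ≤ h u + (δ : EReal)}

/-- The Fenchel–Young function `f^{FY}(x,x*) = f(x) + f*(x*)`. -/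
def FYfn (f : X → EReal) (z : X × StrongDual ℝ X) : EReal := f z.1 + fconj f z.2

/-- `x* ∈ T̆_h(ε,x)` (i.e. `(x*,x) ∈ ∂_{2ε} h(x,x*)`) iff
`(A h)(x,x*) ≤ ⟨x,x*⟩ + ε`. -/
theorem statement14 (T : X → Set (StrongDual ℝ X)) (hT : IsMaxMonotoneOp T)
    (h : X × StrongDual ℝ X → EReal) (hF : InFitzFamily T h) (hproper : EProper h)
    (ε : ℝ) (hε : 0 ≤ ε) (x : X) (p : StrongDual ℝ X) :
    (p, x) ∈ epsSubdiff2 h (2 * ε) (x, p) ↔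
      Amap h (x, p) ≤ ((p x + ε : ℝ) : EReal) := by
  obtain ⟨⟨w₀, hw₀⟩, hbot⟩ := hproper
  have hcbot : conjI h (x, p) ≠ ⊥ := by
    have h1 : ((p w₀.1 + w₀.2 x : ℝ) : EReal) - h w₀ ≤ conjI h (x, p) :=
      le_iSup (fun w => ((p w.1 + w.2 x : ℝ) : EReal) - h w) w₀
    have hw0 : h w₀ = ((h w₀).toReal : EReal) := (EReal.coe_toReal hw₀ (hbot w₀)).symm
    rw [hw0, ← EReal.coe_sub] at h1
    intro hcb
    rw [hcb, le_bot_iff] at h1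
    exact EReal.coe_ne_bot _ h1
  have habot : h (x, p) ≠ ⊥ := hbot _
  constructor
  · rintro ⟨hne, hall⟩
    have haA : h (x, p) = (((h (x, p)).toReal : ℝ) : EReal) :=
      (EReal.coe_toReal hne habot).symm
    have hcle : conjI h (x, p) ≤ ((2 * p x + 2 * ε - (h (x, p)).toReal : ℝ) : EReal) := by
      refine iSup_le fun u => ?_
      by_cases hu : h u = ⊤
      · rw [hu, EReal.sub_top]; exact bot_le
      · have huB : h u = (((h u).toReal : ℝ) : EReal) := (EReal.coe_toReal hu (hbot u)).symm
        have h2 := hall u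
        simp only [map_sub, ContinuousLinearMap.sub_apply] at h2
        rw [haA, huB, ← EReal.coe_add, ← EReal.coe_add, EReal.coe_le_coe_iff] at h2
        show ((p u.1 + u.2 x : ℝ) : EReal) - h u ≤ _
        rw [huB, ← EReal.coe_sub, EReal.coe_le_coe_iff]
        linarith
    have hsum : h (x, p) + conjI h (x, p) ≤ ((2 * p x + 2 * ε : ℝ) : EReal) := by
      calc h (x, p) + conjI h (x, p)
          ≤ (((h (x, p)).toReal : ℝ) : EReal) + ((2 * p x + 2 * ε - (h (x, p)).toReal : ℝ) : EReal) := by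
            rw [← haA]; exact add_le_add_right hcle _
        _ = ((2 * p x + 2 * ε : ℝ) : EReal) := by rw [← EReal.coe_add]; norm_cast; ring
    show (((1 : ℝ)/2 : ℝ) : EReal) * (h (x, p) + conjI h (x, p)) ≤ _
    calc (((1 : ℝ)/2 : ℝ) : EReal) * (h (x, p) + conjI h (x, p))
        ≤ (((1 : ℝ)/2 : ℝ) : EReal) * ((2 * p x + 2 * ε : ℝ) : EReal) :=
          mul_le_mul_of_nonneg_left hsum (by norm_num)
      _ = ((p x + ε : ℝ) : EReal) := by rw [← EReal.coe_mul]; norm_cast; ring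
  · intro hAm
    have hAm' : (((1 : ℝ)/2 : ℝ) : EReal) * (h (x, p) + conjI h (x, p)) ≤ ((p x + ε : ℝ) : EReal) := hAm
    have hne : h (x, p) ≠ ⊤ := by
      intro hat
      rw [hat, EReal.top_add_of_ne_bot hcbot] at hAm'
      have htop : (((1 : ℝ)/2 : ℝ) : EReal) * (⊤ : EReal) = ⊤ := by
        apply EReal.mul_top_of_pos; norm_num
      rw [htop, top_le_iff] at hAm'
      exact EReal.coe_ne_top _ hAm'
    have haA : h (x, p) = (((h (x, p)).toReal : ℝ) : EReal) :=
      (EReal.coe_toReal hne habot).symm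
    have hsum : h (x, p) + conjI h (x, p) ≤ ((2 * p x + 2 * ε : ℝ) : EReal) := by
      have h2 := mul_le_mul_of_nonneg_left hAm' (show (0:EReal) ≤ ((2:ℝ):EReal) by norm_num)
      calc h (x, p) + conjI h (x, p)
          = ((2:ℝ):EReal) * ((((1 : ℝ)/2 : ℝ) : EReal) * (h (x, p) + conjI h (x, p))) := by
            rw [← mul_assoc, ← EReal.coe_mul]; norm_num
        _ ≤ ((2:ℝ):EReal) * ((p x + ε : ℝ) : EReal) := h2
        _ = ((2 * p x + 2 * ε : ℝ) : EReal) := by rw [← EReal.coe_mul]; norm_cast; ring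
    refine ⟨hne, fun u => ?_⟩
    by_cases hu : h u = ⊤
    · rw [hu, EReal.top_add_of_ne_bot (EReal.coe_ne_bot _)]; exact le_top
    · have huB : h u = (((h u).toReal : ℝ) : EReal) := (EReal.coe_toReal hu (hbot u)).symm
      have h1 : ((p u.1 + u.2 x : ℝ) : EReal) - h u ≤ conjI h (x, p) :=
        le_iSup (fun w => ((p w.1 + w.2 x : ℝ) : EReal) - h w) u
      rw [huB, ← EReal.coe_sub] at h1
      have h3 : (((h (x, p)).toReal : ℝ) : EReal) + ((p u.1 + u.2 x - (h u).toReal : ℝ) : EReal)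
          ≤ h (x, p) + conjI h (x, p) := by
        rw [← haA]; exact add_le_add_right h1 _
      have h4 := le_trans h3 hsum
      rw [← EReal.coe_add, EReal.coe_le_coe_iff] at h4
      show h (x, p) + _ ≤ h u + _
      simp only [map_sub, ContinuousLinearMap.sub_apply]
      rw [haA, huB, ← EReal.coe_add, ← EReal.coe_add, EReal.coe_le_coe_iff]
      linarith
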